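/- Let 1 ≤ d < n be integers, let P ∈ ℝ^{d×n} have invertible leading d×d block P_I, set Q := P_I^{-1} P_II, and let α ≥ β ≥ 0, μ ∈ [0,α], ν ∈ [0,β]. Then there exists a constant C > 0, independent of K, L and of the coefficient family, such that for all positive integers K, L and every family c : ℤ^n → ℂ, (Σ_{k ∈ ℤ^n ∖ 𝒦_{K,L}} (‖k_I + Q k_II‖^{2μ} + ‖k_II‖^{2ν}) |c_k|²)^{1/2} ≤ C [ K^{−α}(K^{μ}+L^{ν}) (Σ_{k∈ℤ^n} ‖P k‖^{2α}|c_k|²)^{1/2} + L^{−β}(K^{μ}+L^{ν}) (Σ_{k∈ℤ^n} ‖k‖^{2β}|c_k|²)^{1/2} ]. -/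

import Mathlib

open scoped ENNReal

/-- Euclidean norm of a vector in `ℝ^m`. -/
noncomputable def euclNorm {m : ℕ} (x : Fin m → ℝ) : ℝ :=
  ‖(EuclideanSpace.equiv (Fin m) ℝ).symm x‖

/-- Mixed weight `‖k_I + Q k_II‖^(2α) + ‖k_II‖^(2β)` (real powers, `0⁰ = 1`). -/
noncomputable def wMix (d m : ℕ) (Q : Matrix (Fin d) (Fin m) ℝ) (α β : ℝ)
    (k : Fin (d + m) → ℤ) : ℝ :=
  euclNorm ((fun i => (k (Fin.castAdd m i) : ℝ)) +
      Q.mulVec fun j => (k (Fin.natAdd d j) : ℝ)) ^ (2 * α) +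
    euclNorm (fun j => (k (Fin.natAdd d j) : ℝ)) ^ (2 * β)

/-- Weight `‖P k‖^(2α)`. -/
noncomputable def wP (d m : ℕ) (P : Matrix (Fin d) (Fin (d + m)) ℝ) (α : ℝ)
    (k : Fin (d + m) → ℤ) : ℝ :=
  euclNorm (P.mulVec fun i => (k i : ℝ)) ^ (2 * α)

/-- Weight `‖k‖^(2β)`. -/
noncomputable def wFull (d m : ℕ) (β : ℝ) (k : Fin (d + m) → ℤ) : ℝ :=
  euclNorm (fun i => (k i : ℝ)) ^ (2 * β)

/-- Membership in the parallelogram index set `𝒦_{K,L}`: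
each component of `k_I + Q k_II` lies in `[-K, K)` and each component of `k_II` in `[-L, L)`. -/
def memK (d m : ℕ) (Q : Matrix (Fin d) (Fin m) ℝ) (K L : ℕ) (k : Fin (d + m) → ℤ) : Prop :=
  (∀ i : Fin d,
      -(K : ℝ) ≤ (k (Fin.castAdd m i) : ℝ) + Q.mulVec (fun j => (k (Fin.natAdd d j) : ℝ)) i ∧
      (k (Fin.castAdd m i) : ℝ) + Q.mulVec (fun j => (k (Fin.natAdd d j) : ℝ)) i < (K : ℝ)) ∧
  (∀ j : Fin m, -(L : ℤ) ≤ k (Fin.natAdd d j) ∧ k (Fin.natAdd d j) < (L : ℤ))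

lemma euclNorm_eq {m : ℕ} (x : Fin m → ℝ) :
    euclNorm x = Real.sqrt (∑ i, x i ^ 2) := by
  rw [euclNorm, EuclideanSpace.norm_eq]
  congr 1
  refine Finset.sum_congr rfl fun i _ => ?_
  rw [Real.norm_eq_abs, sq_abs]
  rfl

lemma euclNorm_nonneg {m : ℕ} (x : Fin m → ℝ) : 0 ≤ euclNorm x := norm_nonneg _

lemma abs_le_euclNorm {m : ℕ} (x : Fin m → ℝ) (i : Fin m) : |x i| ≤ euclNorm x := by
  rw [euclNorm_eq, ← Real.sqrt_sq_eq_abs]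
  exact Real.sqrt_le_sqrt (Finset.single_le_sum (fun j _ => sq_nonneg (x j))
    (Finset.mem_univ i))

lemma euclNorm_tail_le {d m : ℕ} (k : Fin (d + m) → ℝ) :
    euclNorm (fun j => k (Fin.natAdd d j)) ≤ euclNorm k := by
  rw [euclNorm_eq, euclNorm_eq]
  apply Real.sqrt_le_sqrt
  rw [Fin.sum_univ_add]
  exact le_add_of_nonneg_left (Finset.sum_nonneg fun i _ => sq_nonneg _)

lemma euclNorm_mulVec_le {a b : ℕ} (A : Matrix (Fin a) (Fin b) ℝ) (v : Fin b → ℝ) :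
    euclNorm (A.mulVec v) ≤ Real.sqrt (∑ i, ∑ j, A i j ^ 2) * euclNorm v := by
  rw [euclNorm_eq, euclNorm_eq, ← Real.sqrt_mul (show (0:ℝ) ≤ ∑ i, ∑ j, A i j ^ 2 from
    Finset.sum_nonneg fun i _ => Finset.sum_nonneg fun j _ => sq_nonneg _)]
  apply Real.sqrt_le_sqrt
  rw [Finset.sum_mul]
  refine Finset.sum_le_sum fun i _ => ?_
  calc A.mulVec v i ^ 2 = (∑ j, A i j * v j) ^ 2 := by
        rw [Matrix.mulVec, dotProduct]
    _ ≤ (∑ j, A i j ^ 2) * ∑ j, v j ^ 2 := Finset.sum_mul_sq_le_sq_mul_sq _ _ _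

-- generic: x "big" case
lemma key1 {t b x w cc K : ℝ} (ht : 0 ≤ t) (htb : t ≤ b) (hK : 1 ≤ K)
    (hx : K ≤ x) (hcc : 1 ≤ cc) (hw : 0 ≤ w) (hxw : x ≤ cc * w) :
    x ^ (2 * t) ≤ cc ^ (2 * b) * K ^ (-(2 * b)) * K ^ (2 * t) * w ^ (2 * b) := by
  have hK0 : (0 : ℝ) < K := by linarith
  have hx0 : (0 : ℝ) < x := by linarith
  have h1 : x ^ (2 * t) * K ^ (2 * b) ≤ K ^ (2 * t) * x ^ (2 * b) := by
    have e1 : K ^ (2 * b) = K ^ (2 * t) * K ^ (2 * b - 2 * t) := by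
      rw [← Real.rpow_add hK0]; ring_nf
    have e2 : x ^ (2 * b) = x ^ (2 * t) * x ^ (2 * b - 2 * t) := by
      rw [← Real.rpow_add hx0]; ring_nf
    have h3 : K ^ (2 * b - 2 * t) ≤ x ^ (2 * b - 2 * t) :=
      Real.rpow_le_rpow hK0.le hx (by linarith)
    calc x ^ (2 * t) * K ^ (2 * b)
        = x ^ (2 * t) * K ^ (2 * t) * K ^ (2 * b - 2 * t) := by rw [e1]; ring
      _ ≤ x ^ (2 * t) * K ^ (2 * t) * x ^ (2 * b - 2 * t) := by
          apply mul_le_mul_of_nonneg_left h3; positivity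
      _ = K ^ (2 * t) * x ^ (2 * b) := by rw [e2]; ring
  have h4 : x ^ (2 * b) ≤ cc ^ (2 * b) * w ^ (2 * b) := by
    rw [← Real.mul_rpow (by linarith) hw]
    exact Real.rpow_le_rpow hx0.le hxw (by linarith)
  have hKb : (0 : ℝ) < K ^ (2 * b) := Real.rpow_pos_of_pos hK0 _
  have hKinv : K ^ (-(2 * b)) * K ^ (2 * b) = 1 := by
    rw [← Real.rpow_add hK0]; simp
  calc x ^ (2 * t) = x ^ (2 * t) * K ^ (2 * b) * K ^ (-(2 * b)) := by
        rw [mul_assoc, mul_comm (K ^ (2 * b)), hKinv, mul_one]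
    _ ≤ K ^ (2 * t) * x ^ (2 * b) * K ^ (-(2 * b)) := by
        apply mul_le_mul_of_nonneg_right h1 (Real.rpow_nonneg hK0.le _)
    _ ≤ K ^ (2 * t) * (cc ^ (2 * b) * w ^ (2 * b)) * K ^ (-(2 * b)) := by
        apply mul_le_mul_of_nonneg_right
          (mul_le_mul_of_nonneg_left h4 (Real.rpow_nonneg hK0.le _))
          (Real.rpow_nonneg hK0.le _)
    _ = cc ^ (2 * b) * K ^ (-(2 * b)) * K ^ (2 * t) * w ^ (2 * b) := by ring

-- "big factor at least one"
lemma key2 {b x K : ℝ} (hb : 0 ≤ b) (hK : 1 ≤ K) (hx : K ≤ x) :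
    1 ≤ K ^ (-(2 * b)) * x ^ (2 * b) := by
  have hK0 : (0 : ℝ) < K := by linarith
  have h3 : K ^ (2 * b) ≤ x ^ (2 * b) := Real.rpow_le_rpow hK0.le hx (by linarith)
  have hKinv : K ^ (-(2 * b)) * K ^ (2 * b) = 1 := by rw [← Real.rpow_add hK0]; simp
  calc (1 : ℝ) = K ^ (-(2 * b)) * K ^ (2 * b) := hKinv.symm
    _ ≤ K ^ (-(2 * b)) * x ^ (2 * b) :=
        mul_le_mul_of_nonneg_left h3 (Real.rpow_nonneg hK0.le _)

-- "small" case
lemma key3 {t x M : ℝ} (ht : 0 ≤ t) (hx : 0 ≤ x) (hM : x ≤ M) :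
    x ^ (2 * t) ≤ (M ^ t) ^ 2 := by
  have hM0 : 0 ≤ M := le_trans hx hM
  calc x ^ (2 * t) ≤ M ^ (2 * t) := Real.rpow_le_rpow hx hM (by linarith)
    _ = (M ^ t) ^ 2 := by
        rw [← Real.rpow_natCast (M ^ t) 2, ← Real.rpow_mul hM0]; norm_num; ring_nf

lemma rpow_sq {x a : ℝ} (hx : 0 ≤ x) : (x ^ a) ^ 2 = x ^ (2 * a) := by
  rw [← Real.rpow_natCast (x ^ a) 2, ← Real.rpow_mul hx]
  norm_num; ring_nf

lemma pointwise {α β μ ν Y Z W F cP k1 l1 : ℝ}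
    (hβ : 0 ≤ β) (hαβ : β ≤ α) (hμ0 : 0 ≤ μ) (hμ : μ ≤ α) (hν0 : 0 ≤ ν) (hν : ν ≤ β)
    (hk1 : 1 ≤ k1) (hl1 : 1 ≤ l1) (hcP : 1 ≤ cP)
    (hY : 0 ≤ Y) (hZ : 0 ≤ Z) (hW : 0 ≤ W) (hF : 0 ≤ F)
    (hYW : Y ≤ cP * W) (hZF : Z ≤ F) (hbig : k1 ≤ Y ∨ l1 ≤ Z) :
    Y ^ (2 * μ) + Z ^ (2 * ν) ≤
      (2 * cP ^ α * k1 ^ (-α) * (k1 ^ μ + l1 ^ ν)) ^ 2 * W ^ (2 * α) +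
      (2 * cP ^ α * l1 ^ (-β) * (k1 ^ μ + l1 ^ ν)) ^ 2 * F ^ (2 * β) := by
  have hα : 0 ≤ α := le_trans hβ hαβ
  have hk0 : (0:ℝ) < k1 := by linarith
  have hl0 : (0:ℝ) < l1 := by linarith
  have hcP0 : (0:ℝ) < cP := by linarith
  set S := k1 ^ μ + l1 ^ ν with hS
  have hkμS : k1 ^ μ ≤ S := le_add_of_nonneg_right (Real.rpow_nonneg hl0.le _)
  have hlνS : l1 ^ ν ≤ S := le_add_of_nonneg_left (Real.rpow_nonneg hk0.le _)
  have hS0 : 0 ≤ S := le_trans (Real.rpow_nonneg hk0.le _) hkμS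
  -- A0 and B0
  set A0 := cP ^ (2 * α) * k1 ^ (-(2 * α)) * S ^ 2 * W ^ (2 * α) with hA0
  set B0 := l1 ^ (-(2 * β)) * S ^ 2 * F ^ (2 * β) with hB0
  have hA0n : 0 ≤ A0 := by positivity
  have hB0n : 0 ≤ B0 := by positivity
  -- bound in the "Y big" case
  have bigY : k1 ≤ Y → Y ^ (2 * μ) ≤ A0 := by
    intro h
    calc Y ^ (2 * μ) ≤ cP ^ (2 * α) * k1 ^ (-(2 * α)) * k1 ^ (2 * μ) * W ^ (2 * α) :=
          key1 hμ0 hμ hk1 h hcP hW hYW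
      _ ≤ A0 := by
          rw [hA0]
          have h2 : k1 ^ (2 * μ) ≤ S ^ 2 := by
            rw [← rpow_sq hk0.le]
            exact pow_le_pow_left₀ (Real.rpow_nonneg hk0.le _) hkμS 2
          gcongr
  have bigZ : l1 ≤ Z → Z ^ (2 * ν) ≤ B0 := by
    intro h
    have h1 : Z ^ (2 * ν) ≤ (1:ℝ) ^ (2 * β) * l1 ^ (-(2 * β)) * l1 ^ (2 * ν) * F ^ (2 * β) :=
      key1 hν0 hν hl1 h le_rfl hF (by linarith)
    rw [Real.one_rpow, one_mul] at h1
    have h2 : l1 ^ (2 * ν) ≤ S ^ 2 := by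
      rw [← rpow_sq hl0.le]
      exact pow_le_pow_left₀ (Real.rpow_nonneg hl0.le _) hlνS 2
    calc Z ^ (2 * ν) ≤ l1 ^ (-(2 * β)) * l1 ^ (2 * ν) * F ^ (2 * β) := h1
      _ ≤ B0 := by
          rw [hB0]
          rw [mul_assoc, mul_assoc]
          exact mul_le_mul_of_nonneg_left
            (mul_le_mul_of_nonneg_right h2 (Real.rpow_nonneg hF _))
            (Real.rpow_nonneg hl0.le _)
  -- small cases
  have smallY : Y ≤ k1 → l1 ≤ Z → Y ^ (2 * μ) ≤ B0 := by
    intro h hz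
    have h1 : Y ^ (2 * μ) ≤ (k1 ^ μ) ^ 2 := key3 hμ0 hY h
    have h2 : (k1 ^ μ) ^ 2 ≤ S ^ 2 := pow_le_pow_left₀ (Real.rpow_nonneg hk0.le _) hkμS 2
    have h3 : 1 ≤ l1 ^ (-(2 * β)) * F ^ (2 * β) := key2 hβ hl1 (le_trans hz hZF)
    calc Y ^ (2 * μ) ≤ S ^ 2 := le_trans h1 h2
      _ = S ^ 2 * 1 := (mul_one _).symm
      _ ≤ S ^ 2 * (l1 ^ (-(2 * β)) * F ^ (2 * β)) :=
          mul_le_mul_of_nonneg_left h3 (by positivity)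
      _ = B0 := by rw [hB0]; ring
  have smallZ : Z ≤ l1 → k1 ≤ Y → Z ^ (2 * ν) ≤ A0 := by
    intro h hy
    have h1 : Z ^ (2 * ν) ≤ (l1 ^ ν) ^ 2 := key3 hν0 hZ h
    have h2 : (l1 ^ ν) ^ 2 ≤ S ^ 2 := pow_le_pow_left₀ (Real.rpow_nonneg hl0.le _) hlνS 2
    have h3 : 1 ≤ k1 ^ (-(2 * α)) * Y ^ (2 * α) := key2 hα hk1 hy
    have h4 : Y ^ (2 * α) ≤ cP ^ (2 * α) * W ^ (2 * α) := by
      rw [← Real.mul_rpow hcP0.le hW]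
      exact Real.rpow_le_rpow hY hYW (by linarith)
    have h5 : 1 ≤ k1 ^ (-(2 * α)) * (cP ^ (2 * α) * W ^ (2 * α)) :=
      le_trans h3 (mul_le_mul_of_nonneg_left h4 (Real.rpow_nonneg hk0.le _))
    calc Z ^ (2 * ν) ≤ S ^ 2 := le_trans h1 h2
      _ = S ^ 2 * 1 := (mul_one _).symm
      _ ≤ S ^ 2 * (k1 ^ (-(2 * α)) * (cP ^ (2 * α) * W ^ (2 * α))) :=
          mul_le_mul_of_nonneg_left h5 (by positivity)
      _ = A0 := by rw [hA0]; ring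
  -- combine
  have hYA : Y ^ (2 * μ) ≤ A0 + B0 := by
    rcases le_or_gt k1 Y with h | h
    · exact le_trans (bigY h) (le_add_of_nonneg_right hB0n)
    · rcases hbig with h' | h'
      · exact absurd h' (not_le.mpr h)
      · exact le_trans (smallY h.le h') (le_add_of_nonneg_left hA0n)
  have hZB : Z ^ (2 * ν) ≤ A0 + B0 := by
    rcases le_or_gt l1 Z with h | h
    · exact le_trans (bigZ h) (le_add_of_nonneg_left hA0n)
    · rcases hbig with h' | h'
      · exact le_trans (smallZ h.le h') (le_add_of_nonneg_right hB0n)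
      · exact absurd h' (not_le.mpr h)
  have hcPα1 : 1 ≤ cP ^ (2 * α) := by
    calc (1:ℝ) = 1 ^ (2 * α) := (Real.one_rpow _).symm
      _ ≤ cP ^ (2 * α) := Real.rpow_le_rpow zero_le_one hcP (by linarith)
  have e1 : (2 * cP ^ α * k1 ^ (-α) * S) ^ 2 = 4 * (cP ^ (2*α) * k1 ^ (-(2*α)) * S ^ 2) := by
    have a1 : (cP ^ α) ^ 2 = cP ^ (2 * α) := rpow_sq hcP0.le
    have a2 : (k1 ^ (-α)) ^ 2 = k1 ^ (-(2 * α)) := by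
      rw [rpow_sq hk0.le]; ring_nf
    rw [← a1, ← a2]; ring
  have e2 : (2 * cP ^ α * l1 ^ (-β) * S) ^ 2 = 4 * (cP ^ (2*α) * l1 ^ (-(2*β)) * S ^ 2) := by
    have a1 : (cP ^ α) ^ 2 = cP ^ (2 * α) := rpow_sq hcP0.le
    have a2 : (l1 ^ (-β)) ^ 2 = l1 ^ (-(2 * β)) := by
      rw [rpow_sq hl0.le]; ring_nf
    rw [← a1, ← a2]; ring
  have final1 : 2 * A0 ≤ (2 * cP ^ α * k1 ^ (-α) * S) ^ 2 * W ^ (2 * α) := by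
    have h4 : (2 * cP ^ α * k1 ^ (-α) * S) ^ 2 * W ^ (2 * α) = 4 * A0 := by
      rw [e1, hA0]; ring
    rw [h4]; linarith
  have final2 : 2 * B0 ≤ (2 * cP ^ α * l1 ^ (-β) * S) ^ 2 * F ^ (2 * β) := by
    have h4 : (2 * cP ^ α * l1 ^ (-β) * S) ^ 2 * F ^ (2 * β) = 4 * (cP ^ (2*α) * B0) := by
      rw [e2, hB0]; ring
    have h5 : B0 ≤ cP ^ (2*α) * B0 := le_mul_of_one_le_left hB0n hcPα1
    rw [h4]; linarith
  calc Y ^ (2 * μ) + Z ^ (2 * ν) ≤ 2 * A0 + 2 * B0 := by linarith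
    _ ≤ _ := add_le_add final1 final2

-- matrix identity: P k = PI (k_I + Q k_II)
lemma matrix_id (d m : ℕ)
    (P : Matrix (Fin d) (Fin (d + m)) ℝ)
    (PI : Matrix (Fin d) (Fin d) ℝ) (hPI : PI = P.submatrix id (Fin.castAdd m))
    (PII : Matrix (Fin d) (Fin m) ℝ) (hPII : PII = P.submatrix id (Fin.natAdd d))
    (hinv : IsUnit PI)
    (Q : Matrix (Fin d) (Fin m) ℝ) (hQ : Q = PI⁻¹ * PII)
    (kr : Fin (d + m) → ℝ) :
    ((fun i => kr (Fin.castAdd m i)) + Q.mulVec fun j => kr (Fin.natAdd d j)) =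
      PI⁻¹.mulVec (P.mulVec kr) := by
  have hdet : IsUnit PI.det := (Matrix.isUnit_iff_isUnit_det PI).mp hinv
  set kI : Fin d → ℝ := fun i => kr (Fin.castAdd m i)
  set kII : Fin m → ℝ := fun j => kr (Fin.natAdd d j)
  have hsplit : P.mulVec kr = PI.mulVec kI + PII.mulVec kII := by
    funext i
    simp only [Matrix.mulVec, dotProduct, hPI, hPII, Matrix.submatrix_apply, id_eq,
      Pi.add_apply]
    rw [Fin.sum_univ_add]
  have hPIQ : PI * Q = PII := by
    rw [hQ, ← Matrix.mul_assoc, Matrix.mul_nonsing_inv PI hdet, Matrix.one_mul]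
  have h2 : P.mulVec kr = PI.mulVec (kI + Q.mulVec kII) := by
    rw [hsplit, Matrix.mulVec_add, Matrix.mulVec_mulVec, hPIQ]
  rw [h2, Matrix.mulVec_mulVec, Matrix.nonsing_inv_mul PI hdet, Matrix.one_mulVec]

/-- truncation error bound
`|u - P_{K,L}u|_{μ,ν} ≤ C (K^{-α}(K^μ+L^ν) |u|_α + L^{-β}(K^μ+L^ν) |U|_{H^β})`. -/
theorem stmt5 (d m : ℕ) (hd : 1 ≤ d) (hm : 1 ≤ m)
    (P : Matrix (Fin d) (Fin (d + m)) ℝ)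
    (PI : Matrix (Fin d) (Fin d) ℝ) (hPI : PI = P.submatrix id (Fin.castAdd m))
    (PII : Matrix (Fin d) (Fin m) ℝ) (hPII : PII = P.submatrix id (Fin.natAdd d))
    (hinv : IsUnit PI)
    (Q : Matrix (Fin d) (Fin m) ℝ) (hQ : Q = PI⁻¹ * PII)
    (α β μ ν : ℝ) (hβ : 0 ≤ β) (hαβ : β ≤ α) (hμ0 : 0 ≤ μ) (hμ : μ ≤ α)
    (hν0 : 0 ≤ ν) (hν : ν ≤ β) :
    ∃ C : ℝ, 0 < C ∧ ∀ K L : ℕ, 0 < K → 0 < L → ∀ c : (Fin (d + m) → ℤ) → ℂ,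
      (∑' k : {k : Fin (d + m) → ℤ // ¬ memK d m Q K L k},
          ENNReal.ofReal (wMix d m Q μ ν k.1 * ‖c k.1‖ ^ 2)) ^ ((1 : ℝ) / 2) ≤
        ENNReal.ofReal (C * (K : ℝ) ^ (-α) * ((K : ℝ) ^ μ + (L : ℝ) ^ ν)) *
            (∑' k : Fin (d + m) → ℤ,
              ENNReal.ofReal (wP d m P α k * ‖c k‖ ^ 2)) ^ ((1 : ℝ) / 2) +
          ENNReal.ofReal (C * (L : ℝ) ^ (-β) * ((K : ℝ) ^ μ + (L : ℝ) ^ ν)) *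
            (∑' k : Fin (d + m) → ℤ,
              ENNReal.ofReal (wFull d m β k * ‖c k‖ ^ 2)) ^ ((1 : ℝ) / 2) := by
  classical
  set cP : ℝ := max 1 (Real.sqrt (∑ i, ∑ j, (PI⁻¹ i j) ^ 2)) with hcPdef
  have hcP : 1 ≤ cP := le_max_left _ _
  have hcP0 : (0:ℝ) < cP := by linarith
  refine ⟨2 * cP ^ α, by positivity, ?_⟩
  intro K L hK hL c
  have hk1 : (1:ℝ) ≤ (K:ℝ) := by exact_mod_cast hK
  have hl1 : (1:ℝ) ≤ (L:ℝ) := by exact_mod_cast hL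
  set S : ℝ := (K:ℝ) ^ μ + (L:ℝ) ^ ν with hSdef
  set e1r : ℝ := 2 * cP ^ α * (K:ℝ) ^ (-α) * S with he1r
  set e2r : ℝ := 2 * cP ^ α * (L:ℝ) ^ (-β) * S with he2r
  have he1rn : 0 ≤ e1r := by positivity
  have he2rn : 0 ≤ e2r := by positivity
  -- pointwise bound
  have hbound : ∀ k : Fin (d + m) → ℤ, ¬ memK d m Q K L k →
      wMix d m Q μ ν k ≤ e1r ^ 2 * wP d m P α k + e2r ^ 2 * wFull d m β k := by
    intro k hk
    set kr : Fin (d + m) → ℝ := fun i => (k i : ℝ) with hkr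
    set y : Fin d → ℝ :=
      (fun i => kr (Fin.castAdd m i)) + Q.mulVec fun j => kr (Fin.natAdd d j) with hy
    set Y := euclNorm y with hY
    set Z := euclNorm (fun j => kr (Fin.natAdd d j)) with hZ
    set W := euclNorm (P.mulVec kr) with hW
    set F := euclNorm kr with hF
    have hYW : Y ≤ cP * W := by
      have hid := matrix_id d m P PI hPI PII hPII hinv Q hQ kr
      have h1 : Y ≤ Real.sqrt (∑ i, ∑ j, (PI⁻¹ i j) ^ 2) * W := by
        rw [hY, hy, hid]
        exact euclNorm_mulVec_le _ _
      calc Y ≤ Real.sqrt (∑ i, ∑ j, (PI⁻¹ i j) ^ 2) * W := h1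
        _ ≤ cP * W := mul_le_mul_of_nonneg_right (le_max_right _ _) (euclNorm_nonneg _)
    have hZF : Z ≤ F := euclNorm_tail_le kr
    have hbig : (K:ℝ) ≤ Y ∨ (L:ℝ) ≤ Z := by
      rw [memK, not_and_or] at hk
      rcases hk with hk | hk
      · left
        push_neg at hk
        obtain ⟨i, hi⟩ := hk
        have habs : (K:ℝ) ≤ |y i| := by
          rcases le_or_gt (-(K:ℝ)) (y i) with h | h
          · have := hi h
            exact le_trans this (le_abs_self _)
          · have : (K:ℝ) ≤ -(y i) := by linarith
            exact le_trans this (neg_le_abs _)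
        exact le_trans habs (abs_le_euclNorm y i)
      · right
        push_neg at hk
        obtain ⟨j, hj⟩ := hk
        have habsz : (L:ℤ) ≤ |k (Fin.natAdd d j)| := by
          rcases le_or_gt (-(L:ℤ)) (k (Fin.natAdd d j)) with h | h
          · exact le_trans (hj h) (le_abs_self _)
          · have : (L:ℤ) ≤ -(k (Fin.natAdd d j)) := by linarith
            exact le_trans this (neg_le_abs _)
        have habs : (L:ℝ) ≤ |kr (Fin.natAdd d j)| := by
          rw [hkr]
          calc (L:ℝ) = ((L:ℤ):ℝ) := by push_cast; ring
            _ ≤ (|k (Fin.natAdd d j)| : ℤ) := by exact_mod_cast habsz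
            _ = |(k (Fin.natAdd d j) : ℝ)| := by push_cast; ring
        refine le_trans habs ?_
        rw [hZ]
        exact abs_le_euclNorm (fun j => kr (Fin.natAdd d j)) j
    have key := pointwise (Y := Y) (Z := Z) (W := W) (F := F) (cP := cP)
      (k1 := (K:ℝ)) (l1 := (L:ℝ)) hβ hαβ hμ0 hμ hν0 hν hk1 hl1 hcP
      (euclNorm_nonneg _) (euclNorm_nonneg _) (euclNorm_nonneg _) (euclNorm_nonneg _)
      hYW hZF hbig
    exact key
  -- ENNReal assembly
  set g : (Fin (d + m) → ℤ) → ℝ≥0∞ :=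
    fun k => ENNReal.ofReal (wMix d m Q μ ν k * ‖c k‖ ^ 2) with hg
  set gP : (Fin (d + m) → ℤ) → ℝ≥0∞ :=
    fun k => ENNReal.ofReal (wP d m P α k * ‖c k‖ ^ 2) with hgP
  set gF : (Fin (d + m) → ℤ) → ℝ≥0∞ :=
    fun k => ENNReal.ofReal (wFull d m β k * ‖c k‖ ^ 2) with hgF
  set E1 : ℝ≥0∞ := ENNReal.ofReal e1r with hE1
  set E2 : ℝ≥0∞ := ENNReal.ofReal e2r with hE2
  have hwP_nonneg : ∀ k, 0 ≤ wP d m P α k * ‖c k‖ ^ 2 := by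
    intro k
    have : 0 ≤ wP d m P α k := Real.rpow_nonneg (euclNorm_nonneg _) _
    positivity
  have hwF_nonneg : ∀ k, 0 ≤ wFull d m β k * ‖c k‖ ^ 2 := by
    intro k
    have : 0 ≤ wFull d m β k := Real.rpow_nonneg (euclNorm_nonneg _) _
    positivity
  have hgle : ∀ k : {k : Fin (d + m) → ℤ // ¬ memK d m Q K L k},
      g k.1 ≤ E1 ^ 2 * gP k.1 + E2 ^ 2 * gF k.1 := by
    intro ⟨k, hk⟩
    have h1 : wMix d m Q μ ν k * ‖c k‖ ^ 2 ≤
        e1r ^ 2 * (wP d m P α k * ‖c k‖ ^ 2) + e2r ^ 2 * (wFull d m β k * ‖c k‖ ^ 2) := by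
      have := mul_le_mul_of_nonneg_right (hbound k hk) (sq_nonneg ‖c k‖)
      calc wMix d m Q μ ν k * ‖c k‖ ^ 2
          ≤ (e1r ^ 2 * wP d m P α k + e2r ^ 2 * wFull d m β k) * ‖c k‖ ^ 2 := this
        _ = e1r ^ 2 * (wP d m P α k * ‖c k‖ ^ 2) + e2r ^ 2 * (wFull d m β k * ‖c k‖ ^ 2) := by
            ring
    calc g k = ENNReal.ofReal (wMix d m Q μ ν k * ‖c k‖ ^ 2) := rfl
      _ ≤ ENNReal.ofReal (e1r ^ 2 * (wP d m P α k * ‖c k‖ ^ 2) +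
            e2r ^ 2 * (wFull d m β k * ‖c k‖ ^ 2)) := ENNReal.ofReal_le_ofReal h1
      _ = ENNReal.ofReal (e1r ^ 2 * (wP d m P α k * ‖c k‖ ^ 2)) +
            ENNReal.ofReal (e2r ^ 2 * (wFull d m β k * ‖c k‖ ^ 2)) := by
          rw [ENNReal.ofReal_add (mul_nonneg (sq_nonneg _) (hwP_nonneg k))
            (mul_nonneg (sq_nonneg _) (hwF_nonneg k))]
      _ = E1 ^ 2 * gP k + E2 ^ 2 * gF k := by
          rw [ENNReal.ofReal_mul (sq_nonneg e1r), ENNReal.ofReal_mul (sq_nonneg e2r),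
            ENNReal.ofReal_pow he1rn, ENNReal.ofReal_pow he2rn]
  have step1 : (∑' k : {k : Fin (d + m) → ℤ // ¬ memK d m Q K L k}, g k.1) ≤
      E1 ^ 2 * (∑' k, gP k) + E2 ^ 2 * (∑' k, gF k) := by
    calc (∑' k : {k : Fin (d + m) → ℤ // ¬ memK d m Q K L k}, g k.1)
        ≤ ∑' k : {k : Fin (d + m) → ℤ // ¬ memK d m Q K L k},
            (E1 ^ 2 * gP k.1 + E2 ^ 2 * gF k.1) := ENNReal.tsum_le_tsum hgle
      _ = E1 ^ 2 * (∑' k : {k : Fin (d + m) → ℤ // ¬ memK d m Q K L k}, gP k.1) +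
            E2 ^ 2 * (∑' k : {k : Fin (d + m) → ℤ // ¬ memK d m Q K L k}, gF k.1) := by
          rw [ENNReal.tsum_add, ENNReal.tsum_mul_left, ENNReal.tsum_mul_left]
      _ ≤ E1 ^ 2 * (∑' k, gP k) + E2 ^ 2 * (∑' k, gF k) := by
          gcongr
          · exact ENNReal.tsum_comp_le_tsum_of_injective Subtype.val_injective gP
          · exact ENNReal.tsum_comp_le_tsum_of_injective Subtype.val_injective gF
  have sqrt_sq : ∀ x : ℝ≥0∞, (x ^ 2) ^ ((1:ℝ)/2) = x := by
    intro x
    rw [← ENNReal.rpow_natCast x 2, ← ENNReal.rpow_mul]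
    norm_num
  calc (∑' k : {k : Fin (d + m) → ℤ // ¬ memK d m Q K L k}, g k.1) ^ ((1:ℝ)/2)
      ≤ (E1 ^ 2 * (∑' k, gP k) + E2 ^ 2 * (∑' k, gF k)) ^ ((1:ℝ)/2) :=
        ENNReal.rpow_le_rpow step1 (by norm_num)
    _ ≤ (E1 ^ 2 * (∑' k, gP k)) ^ ((1:ℝ)/2) + (E2 ^ 2 * (∑' k, gF k)) ^ ((1:ℝ)/2) :=
        ENNReal.rpow_add_le_add_rpow _ _ (by norm_num) (by norm_num)
    _ = E1 * (∑' k, gP k) ^ ((1:ℝ)/2) + E2 * (∑' k, gF k) ^ ((1:ℝ)/2) := by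
        rw [ENNReal.mul_rpow_of_nonneg _ _ (by norm_num : (0:ℝ) ≤ 1/2),
          ENNReal.mul_rpow_of_nonneg _ _ (by norm_num : (0:ℝ) ≤ 1/2),
          sqrt_sq E1, sqrt_sq E2]
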